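/- Let β > 0 with β ≠ 1, and let (a_k)_{k≥0} be a sequence of nonnegative real numbers with a_0 ≤ 1 and a_k ≤ 1 − a_0² for all k ≥ 1. Then for every r ∈ (0,1) satisfying 3(1−(1−r)^{1−β})/(1−β) ≥ 2((1−r)^{−β} − 1)/β, one has Σ_{k=0}^∞ r^k · (1/(k+1)) · Σ_{n=0}^k (Γ(k−n+β)/(Γ(k−n+1)Γ(β))) · a_n ≤ (1/r) · (1−(1−r)^{1−β})/(1−β). -/

import Mathlib

open Real Finset

/-- Generalized binomial coefficient `Γ(m+α)/(Γ(m+1)Γ(α))`, defined recursively. -/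
noncomputable def dcoef (α : ℝ) : ℕ → ℝ
  | 0 => 1
  | (m+1) => dcoef α m * ((α + m) / (m + 1))

lemma dcoef_zero (α : ℝ) : dcoef α 0 = 1 := rfl
lemma dcoef_succ (α : ℝ) (m : ℕ) : dcoef α (m+1) = dcoef α m * ((α + m) / (m + 1)) := rfl

lemma dcoef_nonneg {α : ℝ} (hα : 0 < α) (m : ℕ) : 0 ≤ dcoef α m := by
  induction m with
  | zero => norm_num [dcoef_zero]
  | succ m ih =>
    rw [dcoef_succ]
    have h1 : (0:ℝ) ≤ α + m := by positivity
    have h2 : (0:ℝ) < (m:ℝ) + 1 := by positivity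
    positivity

/-- `dcoef` equals the Gamma-quotient form. -/
lemma Gamma_eq_dcoef {α : ℝ} (hα : ∀ m : ℕ, α + m ≠ 0) (m : ℕ) :
    Real.Gamma ((m : ℝ) + α) = dcoef α m * (Real.Gamma ((m : ℝ) + 1) * Real.Gamma α) := by
  induction m with
  | zero => simp [dcoef_zero, Real.Gamma_one]
  | succ m ih =>
    have h1 : ((m+1 : ℕ) : ℝ) + α = ((m:ℝ) + α) + 1 := by push_cast; ring
    have h2 : ((m+1 : ℕ) : ℝ) + 1 = ((m:ℝ) + 1) + 1 := by push_cast; ring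
    have hm : (m:ℝ) + α ≠ 0 := by
      have := hα m; rw [add_comm] at this; exact this
    have hm1 : (m:ℝ) + 1 ≠ 0 := by positivity
    rw [h1, h2, Real.Gamma_add_one hm, Real.Gamma_add_one hm1, ih, dcoef_succ]
    field_simp
    ring

lemma dcoef_succ_mul (α : ℝ) (m : ℕ) :
    ((m:ℝ) + 1) * dcoef α (m+1) = (α + m) * dcoef α m := by
  rw [dcoef_succ]
  have hm1 : (m:ℝ) + 1 ≠ 0 := by positivity
  field_simp

/-- Relation between `dcoef (α+1)` and `dcoef α`. -/
lemma dcoef_add_one {α : ℝ} (hα : α ≠ 0) (m : ℕ) :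
    dcoef (α + 1) m = dcoef α m * (α + m) / α := by
  induction m with
  | zero => simp [dcoef_zero, hα]
  | succ m ih =>
    rw [dcoef_succ, ih, dcoef_succ]
    have hm1 : (m:ℝ) + 1 ≠ 0 := by positivity
    push_cast
    field_simp
    ring

/-- Pascal-type identity. -/
lemma dcoef_pascal {α : ℝ} (hα : α ≠ 0) (m : ℕ) :
    dcoef (α + 1) (m + 1) = dcoef (α + 1) m + dcoef α (m + 1) := by
  rw [dcoef_add_one hα, dcoef_add_one hα, dcoef_succ]
  have hm1 : (m:ℝ) + 1 ≠ 0 := by positivity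
  push_cast
  field_simp
  ring

/-- Partial sums of `dcoef α` are `dcoef (α+1)`. -/
lemma dcoef_sum {α : ℝ} (hα : α ≠ 0) (m : ℕ) :
    ∑ j ∈ Finset.range (m + 1), dcoef α j = dcoef (α + 1) m := by
  induction m with
  | zero => simp [dcoef_zero]
  | succ m ih => rw [Finset.sum_range_succ, ih, dcoef_pascal hα]

/-- Shift identity used to sum `dcoef α k / (k+1)`. -/
lemma dcoef_shift {α : ℝ} (hα : α ≠ 1) (k : ℕ) :
    (α - 1) * dcoef α k = ((k:ℝ) + 1) * dcoef (α - 1) (k + 1) := by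
  induction k with
  | zero => simp [dcoef_zero, dcoef_succ]
  | succ k ih =>
    have h1 : ((k:ℝ) + 1) ≠ 0 := by positivity
    have h2 : ((k:ℝ) + 2) ≠ 0 := by positivity
    rw [dcoef_succ α, dcoef_succ (α-1) (k+1)]
    push_cast
    have : dcoef (α-1) (k+1) = (α - 1) * dcoef α k / ((k:ℝ)+1) := by
      rw [ih]; field_simp
    rw [this]
    field_simp
    ring
/-- Polynomial growth bound: `|dcoef α m| ≤ (m+1)^⌈|α|⌉`. -/
lemma dcoef_le (α : ℝ) (m : ℕ) : |dcoef α m| ≤ ((m:ℝ) + 1) ^ (⌈|α|⌉₊ + 1) := by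
  set K := ⌈|α|⌉₊ + 1 with hK
  have hK1 : 1 ≤ K := Nat.le_add_left 1 _
  induction m with
  | zero =>
    simp only [dcoef, abs_one, Nat.cast_zero, zero_add]
    rw [one_pow]
  | succ m ih =>
    rw [dcoef_succ, abs_mul]
    have h1 : |(α + m) / (m + 1)| ≤ ((m:ℝ) + 1 + K) / ((m:ℝ) + 1) := by
      rw [abs_div]
      have hm1 : (0:ℝ) < (m:ℝ) + 1 := by positivity
      rw [abs_of_pos hm1]
      gcongr
      calc |α + (m:ℝ)| ≤ |α| + (m:ℝ) := by
            rw [add_comm α, add_comm _ ((m:ℝ))]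
            refine (abs_add_le _ _).trans ?_
            simp [abs_of_nonneg ((Nat.cast_nonneg m : (0:ℝ) ≤ m))]
        _ ≤ (m:ℝ) + 1 + K := by
            have : |α| ≤ (K:ℝ) := by
              calc |α| ≤ (⌈|α|⌉₊ : ℝ) := Nat.le_ceil _
                _ ≤ (K:ℝ) := by exact_mod_cast Nat.le_succ _
            linarith
    have h2 : ((m:ℝ) + 1 + K) / ((m:ℝ) + 1) ≤ (((m:ℝ) + 2) / ((m:ℝ) + 1)) ^ K := by
      have hm1 : (0:ℝ) < (m:ℝ) + 1 := by positivity
      rw [div_pow, div_le_div_iff₀ hm1 (by positivity)]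
      have hb : (1:ℝ) + (K:ℝ) * (1 / ((m:ℝ)+1)) ≤ (1 + 1/((m:ℝ)+1)) ^ K := by
        have h0 : (-2:ℝ) ≤ 1/((m:ℝ)+1) := le_trans (show (-2:ℝ) ≤ 0 by norm_num) (by positivity)
        have := one_add_mul_le_pow h0 K
        exact this.trans_eq' (by ring_nf)
      have e1 : (1:ℝ) + 1/((m:ℝ)+1) = ((m:ℝ)+2)/((m:ℝ)+1) := by field_simp; ring
      rw [e1] at hb
      calc ((m:ℝ) + 1 + K) * ((m:ℝ)+1)^K
          = ((1:ℝ) + (K:ℝ) * (1/((m:ℝ)+1))) * ((m:ℝ)+1) * ((m:ℝ)+1)^K := by field_simp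
        _ ≤ (((m:ℝ)+2)/((m:ℝ)+1))^K * ((m:ℝ)+1) * ((m:ℝ)+1)^K := by
            have hm1' : (0:ℝ) ≤ (m:ℝ)+1 := hm1.le
            gcongr
        _ = ((m:ℝ)+2)^K * ((m:ℝ)+1) := by
            rw [div_pow]
            field_simp
    calc |dcoef α m| * |(α + m) / (m + 1)|
        ≤ ((m:ℝ)+1)^K * ((((m:ℝ)+2)/((m:ℝ)+1))^K) := by
          exact mul_le_mul ih (h1.trans h2) (abs_nonneg _) (by positivity)
      _ = ((m:ℝ)+2)^K := by rw [div_pow]; field_simp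
      _ = ((↑(m+1):ℝ)+1)^K := by push_cast; ring_nf

lemma summable_dcoef_aux (α : ℝ) (K : ℕ) {x : ℝ} (hx : |x| < 1) :
    Summable (fun m : ℕ => ((m:ℝ) + 1) ^ K * |x| ^ m) := by
  have h2 : Summable (fun m : ℕ => ((m:ℝ) + 1) ^ K * |x| ^ (m+1)) := by
    have := (summable_nat_add_iff (f := fun m : ℕ => ((m:ℝ)) ^ K * |x| ^ m) 1).mpr
      (summable_pow_mul_geometric_of_norm_lt_one (R := ℝ) K (by simpa using hx))
    simpa [pow_succ] using this.congr (fun m => by push_cast; ring)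
  rcases eq_or_ne x 0 with h | h
  · apply summable_of_ne_finset_zero (s := {0})
    intro m hm
    simp only [Finset.mem_singleton] at hm
    have : m ≠ 0 := hm
    simp [h, zero_pow this]
  · have hx0 : |x| ≠ 0 := abs_ne_zero.mpr h
    have := h2.mul_left (|x|)⁻¹
    exact this.congr (fun m => by field_simp [pow_succ]; ring)

lemma summable_dcoef_pow (α : ℝ) {x : ℝ} (hx : |x| < 1) :
    Summable (fun m : ℕ => dcoef α m * x ^ m) := by
  apply Summable.of_norm
  refine Summable.of_nonneg_of_le (fun m => norm_nonneg _) (fun m => ?_)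
    (summable_dcoef_aux α (⌈|α|⌉₊ + 1) hx)
  rw [Real.norm_eq_abs, abs_mul, abs_pow]
  exact mul_le_mul_of_nonneg_right (dcoef_le α m) (by positivity)

lemma summable_dcoef_deriv (α : ℝ) {b : ℝ} (hb0 : 0 ≤ b) (hb : b < 1) :
    Summable (fun m : ℕ => |dcoef α m| * m * b ^ (m - 1)) := by
  set K := ⌈|α|⌉₊ + 1 with hK
  rw [← summable_nat_add_iff 1]
  have habs : |b| < 1 := by rwa [abs_of_nonneg hb0]
  refine Summable.of_nonneg_of_le (fun m => by positivity) (fun m => ?_)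
    (((summable_dcoef_aux α (K+1) habs).mul_left ((2:ℝ)^(K+1))))
  have h1 : |dcoef α (m+1)| ≤ ((m:ℝ)+2)^K := by
    have h := dcoef_le α (m+1)
    push_cast at h
    have e : ((m:ℝ)+1+1) = (m:ℝ)+2 := by ring
    rwa [e, ← hK] at h
  calc |dcoef α (m+1)| * (↑(m+1)) * b ^ (m + 1 - 1)
      = |dcoef α (m+1)| * ((m:ℝ)+1) * b ^ m := by push_cast; ring_nf
    _ ≤ ((m:ℝ)+2)^K * ((m:ℝ)+2) * b ^ m := by
        have hbm : (0:ℝ) ≤ b ^ m := by positivity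
        exact mul_le_mul_of_nonneg_right
          (mul_le_mul h1 (by linarith) (by positivity) (by positivity)) hbm
    _ = ((m:ℝ)+2)^(K+1) * b ^ m := by ring
    _ ≤ (2*((m:ℝ)+1))^(K+1) * b ^ m := by
        have hbm : (0:ℝ) ≤ b ^ m := by positivity
        exact mul_le_mul_of_nonneg_right
          (pow_le_pow_left₀ (by positivity) (by linarith) _) hbm
    _ = (2:ℝ)^(K+1) * (((m:ℝ)+1)^(K+1) * |b| ^ m) := by
        rw [mul_pow, abs_of_nonneg hb0]; ring

/-- The generalized binomial series. -/
lemma dcoef_hasSum (α : ℝ) {x : ℝ} (hx0 : 0 ≤ x) (hx1 : x < 1) :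
    HasSum (fun m : ℕ => dcoef α m * x ^ m) ((1 - x) ^ (-α) : ℝ) := by
  set g : ℝ → ℝ := fun y => ∑' m : ℕ, dcoef α m * y ^ m with hg
  set G : ℝ → ℝ := fun y => ∑' m : ℕ, dcoef α m * ((m : ℝ) * y ^ (m - 1)) with hG
  have hgsum : ∀ y : ℝ, |y| < 1 → HasSum (fun m : ℕ => dcoef α m * y ^ m) (g y) :=
    fun y hy => (summable_dcoef_pow α hy).hasSum
  have hGsum : ∀ y : ℝ, |y| < 1 →
      HasSum (fun m : ℕ => dcoef α m * ((m : ℝ) * y ^ (m - 1))) (G y) := by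
    intro y hy
    refine (Summable.of_norm ?_).hasSum
    refine Summable.of_nonneg_of_le (fun m => norm_nonneg _) (fun m => ?_)
      (summable_dcoef_deriv α (abs_nonneg y) hy)
    rw [Real.norm_eq_abs, abs_mul, abs_mul, abs_pow, Nat.abs_cast, mul_assoc]
  -- differentiability of g
  have hderiv : ∀ y : ℝ, |y| < 1 → HasDerivAt g (G y) y := by
    intro y hy
    set b : ℝ := (|y| + 1) / 2 with hb
    have hb0 : (0:ℝ) ≤ b := by positivity
    have hb1 : b < 1 := by rw [hb]; linarith
    have hyb : |y| < b := by rw [hb]; linarith [abs_nonneg y]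
    refine hasDerivAt_tsum_of_isPreconnected (summable_dcoef_deriv α hb0 hb1)
      (isOpen_Ioo (a := -b) (b := b)) (isPreconnected_Ioo)
      (fun m z _ => ((hasDerivAt_pow m z).const_mul (dcoef α m))) (fun m z hz => ?_)
      (y₀ := 0) ?_ ?_ (abs_lt.mp hyb)
    · have hzb : |z| ≤ b := by
        rcases hz with ⟨h1, h2⟩; rw [abs_le]; constructor <;> linarith
      rw [Real.norm_eq_abs, abs_mul, abs_mul, abs_pow, Nat.abs_cast, ← mul_assoc]
      exact mul_le_mul_of_nonneg_left (pow_le_pow_left₀ (abs_nonneg z) hzb _)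
        (by positivity)
    · exact Set.mem_Ioo.mpr ⟨neg_lt_zero.mpr (by positivity), by positivity⟩
    · exact summable_dcoef_pow α (by norm_num)
  -- the key ODE identity : (1-y) G y = α g y
  have hkey : ∀ y : ℝ, |y| < 1 → (1 - y) * G y = α * g y := by
    intro y hy
    have h0 : (fun m : ℕ => dcoef α m * ((m : ℝ) * y ^ (m - 1))) 0 = 0 := by simp
    have h1 : HasSum (fun m : ℕ => dcoef α (m+1) * (((m:ℝ)+1) * y ^ m)) (G y) := by
      have h2 := (hasSum_nat_add_iff'
        (f := fun m : ℕ => dcoef α m * ((m : ℝ) * y ^ (m - 1))) 1).mpr (hGsum y hy)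
      simp only [Finset.range_one, Finset.sum_singleton, h0, sub_zero] at h2
      refine h2.congr_fun fun m => ?_
      simp only [Nat.add_sub_cancel]
      push_cast
      ring
    have h3 : HasSum (fun m : ℕ => dcoef α m * ((m:ℝ) * y ^ m)) (y * G y) := by
      have := (hGsum y hy).mul_left y
      refine this.congr_fun fun m => ?_
      cases m with
      | zero => simp
      | succ m => push_cast [Nat.add_sub_cancel]; ring
    have h4 : HasSum (fun m : ℕ => α * (dcoef α m * y ^ m)) ((1 - y) * G y) := by
      have h5 := h1.sub h3
      have h6 : (fun m : ℕ => dcoef α (m+1) * (((m:ℝ)+1) * y ^ m)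
          - dcoef α m * ((m:ℝ) * y ^ m)) = fun m : ℕ => α * (dcoef α m * y ^ m) := by
        funext m
        have hrec := dcoef_succ_mul α m
        linear_combination y ^ m * hrec
      rw [h6] at h5
      rw [show (1 - y) * G y = G y - y * G y by ring]; exact h5
    have h7 := (hgsum y hy).mul_left α
    exact h4.unique h7
  -- the auxiliary function φ is constant on [0, x]
  have hmem : ∀ y ∈ Set.Icc (0:ℝ) x, |y| < 1 := by
    intro y hy
    rw [abs_of_nonneg hy.1]
    exact lt_of_le_of_lt hy.2 hx1
  have hphi : ∀ y ∈ Set.Icc (0:ℝ) x, HasDerivAt (fun z => g z * (1 - z) ^ α) 0 y := by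
    intro y hy
    have hy1 : |y| < 1 := hmem y hy
    have hy1' : (0:ℝ) < 1 - y := by
      rcases abs_lt.mp hy1 with ⟨_, h⟩; linarith
    have hd1 : HasDerivAt (fun z : ℝ => 1 - z) (-1) y := (hasDerivAt_id y).const_sub 1
    have hd2 : HasDerivAt (fun z : ℝ => (1 - z) ^ α)
        ((α * (1 - y) ^ (α - 1)) * (-1)) y :=
      (Real.hasDerivAt_rpow_const (x := 1 - y) (p := α) (Or.inl hy1'.ne')).comp y hd1
    have hd3 := (hderiv y hy1).mul hd2
    refine hd3.congr_deriv (Eq.symm ?_)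
    have e1 : (1 - y) ^ α = (1 - y) ^ (α - 1) * (1 - y) := by
      rw [← Real.rpow_add_one hy1'.ne' (α - 1)]; ring_nf
    have e2 := hkey y hy1
    rw [e1]
    linear_combination (-((1 - y) ^ (α - 1))) * e2
  have hcont : ContinuousOn (fun z => g z * (1 - z) ^ α) (Set.Icc 0 x) :=
    fun y hy => ((hphi y hy).continuousAt).continuousWithinAt
  have hconst := constant_of_has_deriv_right_zero hcont
    (fun y hy => ((hphi y ⟨hy.1, hy.2.le⟩).hasDerivWithinAt)) x (Set.right_mem_Icc.mpr hx0)
  -- evaluate at 0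
  have hg0 : HasSum (fun m : ℕ => dcoef α m * (0:ℝ)^m) 1 := by
    have h := hasSum_single (f := fun m : ℕ => dcoef α m * (0:ℝ)^m) 0
      (fun m hm => by rcases Nat.exists_eq_succ_of_ne_zero hm with ⟨n, rfl⟩; simp)
    simpa [dcoef_zero] using h
  have hg0' : g 0 = 1 := ((hgsum 0 (by norm_num)).unique hg0)
  have hx1' : (0:ℝ) < 1 - x := by linarith
  have hval : g x * (1 - x) ^ α = 1 := by
    rw [hconst, hg0']
    simp [Real.one_rpow]
  have hgx : g x = (1 - x) ^ (-α) := by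
    rw [Real.rpow_neg hx1'.le]
    exact eq_inv_of_mul_eq_one_left (by linear_combination hval)
  have hfin := hgsum x (by rw [abs_of_nonneg hx0]; exact hx1)
  rwa [hgx] at hfin

lemma dcoef_sum' {α : ℝ} (hα : α ≠ 0) (k : ℕ) :
    ∑ j ∈ Finset.range k, dcoef α j = dcoef (α + 1) k - dcoef α k := by
  cases k with
  | zero => simp [dcoef_zero]
  | succ m => rw [dcoef_sum hα m, dcoef_pascal hα m]; ring

/-- Bohr-type inequality for the β-Cesàro operator (real coefficient form of
Theorem 2.1). -/
theorem cesaro_bohr_beta (β : ℝ) (hβ : 0 < β) (hβ1 : β ≠ 1) (a : ℕ → ℝ)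
    (ha : ∀ k, 0 ≤ a k) (ha0 : a 0 ≤ 1) (hak : ∀ k, 1 ≤ k → a k ≤ 1 - (a 0) ^ 2)
    (r : ℝ) (hr : r ∈ Set.Ioo (0 : ℝ) 1)
    (hR : 2 * ((1 - r) ^ (-β) - 1) / β ≤ 3 * (1 - (1 - r) ^ (1 - β)) / (1 - β)) :
    ∑' k : ℕ, r ^ k * ((1 / (k + 1 : ℝ)) *
        ∑ n ∈ Finset.range (k + 1),
          Real.Gamma (((k - n : ℕ) : ℝ) + β) /
            (Real.Gamma (((k - n : ℕ) : ℝ) + 1) * Real.Gamma β) * a n)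
      ≤ (1 / r) * ((1 - (1 - r) ^ (1 - β)) / (1 - β)) := by
  obtain ⟨hr0, hr1⟩ := hr
  have hrne : r ≠ 0 := hr0.ne'
  have hβne : β ≠ 0 := hβ.ne'
  have hβ1' : β - 1 ≠ 0 := sub_ne_zero.mpr hβ1
  have h1β : (1:ℝ) - β ≠ 0 := fun h => hβ1 (by linarith)
  set p := a 0 with hp
  have hp0 : 0 ≤ p := ha 0
  have hp1 : p ≤ 1 := ha0
  have hp2 : 0 ≤ 1 - p ^ 2 := by nlinarith
  -- Gamma quotients are dcoef
  have hβnat : ∀ m : ℕ, β + (m:ℝ) ≠ 0 := fun m => by positivity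
  have c_eq : ∀ j : ℕ, Real.Gamma ((j:ℝ) + β) /
      (Real.Gamma ((j:ℝ) + 1) * Real.Gamma β) = dcoef β j := by
    intro j
    have h1 : (0:ℝ) < Real.Gamma ((j:ℝ) + 1) := Real.Gamma_pos_of_pos (by positivity)
    have h2 : (0:ℝ) < Real.Gamma β := Real.Gamma_pos_of_pos hβ
    rw [Gamma_eq_dcoef hβnat j]
    field_simp
  -- the two basic summation identities
  have hbs1 : HasSum (fun m : ℕ => dcoef (β-1) m * r ^ m) ((1-r) ^ (1-β)) := by
    have h := dcoef_hasSum (β-1) hr0.le hr1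
    rwa [show -(β-1) = 1-β from by ring] at h
  have hbs2 : HasSum (fun m : ℕ => dcoef β m * r ^ m) ((1-r) ^ (-β)) :=
    dcoef_hasSum β hr0.le hr1
  have hshift1 : HasSum (fun k : ℕ => dcoef (β-1) (k+1) * r ^ (k+1))
      ((1-r) ^ (1-β) - 1) := by
    have h := (hasSum_nat_add_iff' (f := fun m : ℕ => dcoef (β-1) m * r ^ m) 1).mpr hbs1
    simpa [dcoef_zero] using h
  have hshift2 : HasSum (fun k : ℕ => dcoef β (k+1) * r ^ (k+1))
      ((1-r) ^ (-β) - 1) := by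
    have h := (hasSum_nat_add_iff' (f := fun m : ℕ => dcoef β m * r ^ m) 1).mpr hbs2
    simpa [dcoef_zero] using h
  -- the two weighted sums
  set A : ℝ := (1/(r*(β-1))) * ((1-r) ^ (1-β) - 1) with hA_def
  set A' : ℝ := (1/(r*β)) * ((1-r) ^ (-β) - 1) with hA'_def
  have hA : HasSum (fun k : ℕ => r ^ k * ((1/((k:ℝ)+1)) * dcoef β k)) A := by
    have h := hshift1.mul_left (1/(r*(β-1)))
    have e : (fun k : ℕ => (1/(r*(β-1))) * (dcoef (β-1) (k+1) * r ^ (k+1)))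
        = fun k : ℕ => r ^ k * ((1/((k:ℝ)+1)) * dcoef β k) := by
      funext k
      have hs := dcoef_shift (α := β) hβ1 k
      have hk1 : ((k:ℝ)+1) ≠ 0 := by positivity
      field_simp
      linear_combination (-(r ^ (k+1))) * hs
    rwa [e] at h
  have hB : HasSum (fun k : ℕ => r ^ k * ((1/((k:ℝ)+1)) * dcoef (β+1) k)) A' := by
    have h := hshift2.mul_left (1/(r*β))
    have e : (fun k : ℕ => (1/(r*β)) * (dcoef β (k+1) * r ^ (k+1)))
        = fun k : ℕ => r ^ k * ((1/((k:ℝ)+1)) * dcoef (β+1) k) := by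
      funext k
      have hs := dcoef_shift (α := β+1) (by intro h; exact hβne (by linarith)) k
      rw [show β + 1 - 1 = β from by ring] at hs
      have hk1 : ((k:ℝ)+1) ≠ 0 := by positivity
      field_simp
      linear_combination (-(r ^ (k+1))) * hs
    rwa [e] at h
  -- the dominating series
  set U : ℕ → ℝ := fun k => r ^ k * ((1/((k:ℝ)+1)) *
    (p * dcoef β k + (1 - p^2) * (dcoef (β+1) k - dcoef β k))) with hU_def
  have hU : HasSum U (p * A + (1 - p^2) * (A' - A)) := by
    have h := (hA.mul_left p).add ((hB.sub hA).mul_left (1 - p^2))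
    have e : (fun k : ℕ => p * (r ^ k * ((1/((k:ℝ)+1)) * dcoef β k))
        + (1 - p^2) * (r ^ k * ((1/((k:ℝ)+1)) * dcoef (β+1) k)
          - r ^ k * ((1/((k:ℝ)+1)) * dcoef β k))) = U := by
      funext k; rw [hU_def]; ring
    rwa [e] at h
  -- termwise comparison
  have hdn : ∀ j, 0 ≤ dcoef β j := dcoef_nonneg hβ
  have hsum_nonneg : ∀ k, 0 ≤ dcoef (β+1) k - dcoef β k := by
    intro k
    rw [← dcoef_sum' hβne k]
    exact Finset.sum_nonneg fun j _ => hdn j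
  set T : ℕ → ℝ := fun k => r ^ k * ((1 / ((k:ℝ) + 1)) *
      ∑ n ∈ Finset.range (k + 1),
        Real.Gamma (((k - n : ℕ) : ℝ) + β) /
          (Real.Gamma (((k - n : ℕ) : ℝ) + 1) * Real.Gamma β) * a n) with hT_def
  have hT_eq : ∀ k, T k = r ^ k * ((1 / ((k:ℝ) + 1)) *
      ∑ n ∈ Finset.range (k + 1), dcoef β (k - n) * a n) := by
    intro k
    have hsc : ∑ n ∈ Finset.range (k + 1),
        Real.Gamma (((k - n : ℕ) : ℝ) + β) /
          (Real.Gamma (((k - n : ℕ) : ℝ) + 1) * Real.Gamma β) * a n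
        = ∑ n ∈ Finset.range (k + 1), dcoef β (k - n) * a n :=
      Finset.sum_congr rfl fun n _ => by rw [c_eq (k - n)]
    simp only [hT_def]
    rw [hsc]
  have hT_nonneg : ∀ k, 0 ≤ T k := by
    intro k
    rw [hT_eq]
    have : 0 ≤ ∑ n ∈ Finset.range (k + 1), dcoef β (k - n) * a n :=
      Finset.sum_nonneg fun n _ => mul_nonneg (hdn _) (ha n)
    positivity
  have hTU : ∀ k, T k ≤ U k := by
    intro k
    rw [hT_eq, hU_def]
    have hinner : ∑ n ∈ Finset.range (k + 1), dcoef β (k - n) * a n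
        ≤ p * dcoef β k + (1 - p^2) * (dcoef (β+1) k - dcoef β k) := by
      rw [Finset.sum_range_succ']
      have h1 : ∑ i ∈ Finset.range k, dcoef β (k - (i+1)) * a (i+1)
          ≤ ∑ i ∈ Finset.range k, dcoef β (k - 1 - i) * (1 - p^2) := by
        refine Finset.sum_le_sum fun i hi => ?_
        rw [show k - (i+1) = k - 1 - i from by omega]
        exact mul_le_mul_of_nonneg_left (hak (i+1) (by omega)) (hdn _)
      have h2 : ∑ i ∈ Finset.range k, dcoef β (k - 1 - i) * (1 - p^2)
          = (1 - p^2) * (dcoef (β+1) k - dcoef β k) := by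
        rw [← Finset.sum_mul, Finset.sum_range_reflect (fun j => dcoef β j) k,
          dcoef_sum' hβne k]
        ring
      have h3 : dcoef β (k - 0) * a 0 = p * dcoef β k := by
        rw [Nat.sub_zero]; ring
      rw [h3]
      linarith [h1.trans_eq h2]
    have hcoef : (0:ℝ) ≤ r ^ k * (1 / ((k:ℝ) + 1)) := by positivity
    calc r ^ k * ((1 / ((k:ℝ) + 1)) * ∑ n ∈ Finset.range (k + 1), dcoef β (k - n) * a n)
        = (r ^ k * (1 / ((k:ℝ) + 1))) * ∑ n ∈ Finset.range (k + 1), dcoef β (k - n) * a n := by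
          ring
      _ ≤ (r ^ k * (1 / ((k:ℝ) + 1))) *
          (p * dcoef β k + (1 - p^2) * (dcoef (β+1) k - dcoef β k)) :=
          mul_le_mul_of_nonneg_left hinner hcoef
      _ = r ^ k * ((1/((k:ℝ)+1)) *
          (p * dcoef β k + (1 - p^2) * (dcoef (β+1) k - dcoef β k))) := by ring
  -- summability and comparison of sums
  have hTsummable : Summable T :=
    Summable.of_nonneg_of_le hT_nonneg hTU hU.summable
  have hstep1 : ∑' k, T k ≤ p * A + (1 - p^2) * (A' - A) := by
    rw [← hU.tsum_eq]
    exact Summable.tsum_le_tsum hTU hTsummable hU.summable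
  -- final numeric comparison
  have hAnn : 0 ≤ A := hA.nonneg fun k => by
    have := hdn k; positivity
  have hBnn : 0 ≤ A' - A := by
    have := (hB.sub hA).nonneg fun k => by
      have h := hsum_nonneg k
      have : r ^ k * ((1/((k:ℝ)+1)) * dcoef (β+1) k)
          - r ^ k * ((1/((k:ℝ)+1)) * dcoef β k)
          = (r ^ k * (1/((k:ℝ)+1))) * (dcoef (β+1) k - dcoef β k) := by ring
      rw [this]
      positivity
    linarith [this]
  have h2B : 2 * (A' - A) ≤ A := by
    have hRr : 2 * A' ≤ 3 * A := by
      rw [hA_def, hA'_def]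
      have e1 : (1/(r*(β-1))) * ((1-r) ^ (1-β) - 1) = (1/r) * ((1 - (1-r) ^ (1-β))/(1-β)) := by
        field_simp
        ring
      have e2 : (1/(r*β)) * ((1-r) ^ (-β) - 1) = (1/r) * (((1-r) ^ (-β) - 1)/β) := by
        field_simp
      rw [e1, e2]
      have h3 : ((1-r) ^ (-β) - 1)/β * 2 ≤ (1 - (1-r) ^ (1-β))/(1-β) * 3 := by
        have ha' : 2 * ((1 - r) ^ (-β) - 1) / β = ((1-r) ^ (-β) - 1)/β * 2 := by ring
        have hb' : 3 * (1 - (1 - r) ^ (1 - β)) / (1 - β) = (1 - (1-r) ^ (1-β))/(1-β) * 3 := by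
          ring
        rw [ha'] at hR; rw [hb'] at hR; exact hR
      have hrinv : (0:ℝ) < 1/r := by positivity
      nlinarith [h3, hrinv]
    linarith
  have hfinal : p * A + (1 - p^2) * (A' - A) ≤ A := by
    nlinarith [hAnn, hBnn, h2B, hp0, hp1, sq_nonneg (1 - p), hp2]
  -- wrap up
  have hArhs : A = (1 / r) * ((1 - (1 - r) ^ (1 - β)) / (1 - β)) := by
    rw [hA_def]
    field_simp
    ring
  calc ∑' k, T k ≤ p * A + (1 - p^2) * (A' - A) := hstep1
    _ ≤ A := hfinal
    _ = (1 / r) * ((1 - (1 - r) ^ (1 - β)) / (1 - β)) := hArhs
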